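/- If (ξ₁,ξ₂,ξ₃) solves ξ̇₁ = -ξ₂, ξ̇₂ = ξ₁ + ξ₃ cos(μt), ξ̇₃ = -ξ₂ cos(μt) on the unit sphere ξ₁²+ξ₂²+ξ₃² = 1 with ξ₁ - iξ₂ ≠ 0 and ξ₃ + 1 ≠ 0, then both u₁ = (ξ₃+1)/(ξ₁ - iξ₂) and u₂ = -(ξ₁ + iξ₂)/(ξ₃+1) satisfy the Riccati equation u̇ = -(i/2)cos(μt) + i u + (i/2)cos(μt) u². -/

import Mathlib

open Complex

/-- On the unit sphere, the stereographic-type variables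
u₁ = (ξ₃+1)/(ξ₁-iξ₂) and u₂ = -(ξ₁+iξ₂)/(ξ₃+1) built from a solution of the
normal variational equations satisfy the Riccati equation
u̇ = -(i/2)cos(μt) + i u + (i/2)cos(μt) u². -/
theorem sphere_reduction_Riccati (μ : ℝ) (ξ₁ ξ₂ ξ₃ : ℝ → ℂ)
    (h1 : ∀ t, HasDerivAt ξ₁ (-(ξ₂ t)) t)
    (h2 : ∀ t, HasDerivAt ξ₂ (ξ₁ t + ξ₃ t * Complex.cos (μ * t)) t)
    (h3 : ∀ t, HasDerivAt ξ₃ (-(ξ₂ t) * Complex.cos (μ * t)) t)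
    (hsphere : ∀ t, ξ₁ t ^ 2 + ξ₂ t ^ 2 + ξ₃ t ^ 2 = 1)
    (hden1 : ∀ t, ξ₁ t - I * ξ₂ t ≠ 0)
    (hden2 : ∀ t, ξ₃ t + 1 ≠ 0) :
    ∀ t : ℝ,
      (HasDerivAt (fun s => (ξ₃ s + 1) / (ξ₁ s - I * ξ₂ s))
        (-(I/2) * Complex.cos (μ * t) + I * ((ξ₃ t + 1) / (ξ₁ t - I * ξ₂ t))
          + (I/2) * Complex.cos (μ * t) * ((ξ₃ t + 1) / (ξ₁ t - I * ξ₂ t)) ^ 2) t) ∧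
      (HasDerivAt (fun s => -((ξ₁ s + I * ξ₂ s) / (ξ₃ s + 1)))
        (-(I/2) * Complex.cos (μ * t) + I * (-((ξ₁ t + I * ξ₂ t) / (ξ₃ t + 1)))
          + (I/2) * Complex.cos (μ * t) * (-((ξ₁ t + I * ξ₂ t) / (ξ₃ t + 1))) ^ 2) t) := by
  intro t
  have d1 := h1 t
  have d2 := h2 t
  have d3 := h3 t
  have hs := hsphere t
  have hn1 := hden1 t
  have hn2 := hden2 t
  set a := ξ₁ t
  set b := ξ₂ t
  set c := ξ₃ t
  set C := Complex.cos (μ * t) with hC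
  constructor
  · have hnum : HasDerivAt (fun s => ξ₃ s + 1) (-(ξ₂ t) * Complex.cos (μ * t)) t :=
      d3.add_const 1
    have hden : HasDerivAt (fun s => ξ₁ s - I * ξ₂ s)
        (-(ξ₂ t) - I * (ξ₁ t + ξ₃ t * Complex.cos (μ * t))) t := d1.sub (d2.const_mul I)
    have hq := hnum.div hden hn1
    refine hq.congr_deriv (Eq.symm ?_)
    have hu : (c + 1) / (a - I * b) * (a - I * b) = c + 1 := div_mul_cancel₀ _ hn1
    rw [eq_div_iff (pow_ne_zero 2 hn1)]
    linear_combination (-(I * C / 2)) * hs + (C * a * b - (I / 2) * C * b ^ 2 - (c + 1) * b) * Complex.I_sq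
      + I * (a - I * b) * hu
      + (I / 2) * C * ((c + 1) / (a - I * b) * (a - I * b) + (c + 1)) * hu
  · have hnum : HasDerivAt (fun s => ξ₁ s + I * ξ₂ s)
        (-(ξ₂ t) + I * (ξ₁ t + ξ₃ t * Complex.cos (μ * t))) t := d1.add (d2.const_mul I)
    have hden : HasDerivAt (fun s => ξ₃ s + 1) (-(ξ₂ t) * Complex.cos (μ * t)) t :=
      d3.add_const 1
    have hq := (hnum.div hden hn2).neg
    refine hq.congr_deriv (Eq.symm ?_)
    have hv : (a + I * b) / (c + 1) * (c + 1) = a + I * b := div_mul_cancel₀ _ hn2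
    conv_rhs => rw [← neg_div]
    rw [eq_div_iff (pow_ne_zero 2 (hden2 t))]
    linear_combination (I * C / 2) * hs + (C * a * b + (I / 2) * C * b ^ 2 - (c + 1) * b) * Complex.I_sq
      - I * (c + 1) * hv
      + (I / 2) * C * ((a + I * b) / (c + 1) * (c + 1) + (a + I * b)) * hv
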